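/- In the Laver table of order 2^n, the operations ⋆ₙ and ∘ₙ satisfy: p ⋆ₙ (q ∘ₙ r) = (p ⋆ₙ q) ∘ₙ (p ⋆ₙ r), (p ∘ₙ q) ⋆ₙ r = p ⋆ₙ (q ⋆ₙ r), and (p ⋆ₙ q) ∘ₙ p = p ∘ₙ q, for all p, q, r. -/
import Mathlib


def LaverAxioms (N : ℕ) (star : ℕ → ℕ → ℕ) : Prop :=
  (∀ p q, p ∈ Set.Icc 1 N → q ∈ Set.Icc 1 N → star p q ∈ Set.Icc 1 N) ∧
  (∀ p ∈ Set.Icc 1 N, star p 1 = p % N + 1) ∧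
  (∀ p q, p ∈ Set.Icc 1 N → q ∈ Set.Icc 1 N →
    star p (star q 1) = star (star p q) (star p 1))

namespace LaverProofAux

/-- inverse of the cyclic successor on `[1, N]` -/
def sinv (N t : ℕ) : ℕ := if t = 1 then N else t - 1

theorem succ_inj {N : ℕ} (hN : 1 ≤ N) {a b : ℕ} (ha : a ∈ Set.Icc 1 N)
    (hb : b ∈ Set.Icc 1 N) (h : a % N + 1 = b % N + 1) : a = b := by
  rw [Set.mem_Icc] at ha hb
  have key : ∀ c : ℕ, 1 ≤ c → c ≤ N → c % N = if c = N then 0 else c := by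
    intro c h1 h2
    rcases eq_or_lt_of_le h2 with h' | h'
    · subst h'; simp
    · rw [if_neg (by omega), Nat.mod_eq_of_lt h']
  rw [key a ha.1 ha.2, key b hb.1 hb.2] at h
  split_ifs at h <;> omega

section Core

variable {N : ℕ} {star : ℕ → ℕ → ℕ}

theorem rowN (hN : 1 ≤ N)
    (hbase : ∀ p ∈ Set.Icc 1 N, star p 1 = p % N + 1)
    (hdist : ∀ p q, p ∈ Set.Icc 1 N → q ∈ Set.Icc 1 N →
      star p (star q 1) = star (star p q) (star p 1)) :
    ∀ q ∈ Set.Icc 1 N, star N q = q := by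
  have hNm : N ∈ Set.Icc 1 N := Set.mem_Icc.mpr ⟨hN, le_rfl⟩
  have hN1 : star N 1 = 1 := by rw [hbase N hNm, Nat.mod_self]
  intro q hq
  rw [Set.mem_Icc] at hq
  obtain ⟨h1, h2⟩ := hq
  revert h2
  induction q, h1 using Nat.le_induction with
  | base => intro _; exact hN1
  | succ q h1 IH =>
    intro h2
    have hqm : q ∈ Set.Icc 1 N := Set.mem_Icc.mpr ⟨h1, by omega⟩
    have hq1 : star q 1 = q + 1 := by rw [hbase q hqm, Nat.mod_eq_of_lt (by omega)]
    have h3 := hdist N q hNm hqm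
    rw [hq1, IH (by omega), hN1, hq1] at h3
    exact h3

theorem gtl (hN : 1 ≤ N)
    (hcl : ∀ p q, p ∈ Set.Icc 1 N → q ∈ Set.Icc 1 N → star p q ∈ Set.Icc 1 N)
    (hbase : ∀ p ∈ Set.Icc 1 N, star p 1 = p % N + 1)
    (hdist : ∀ p q, p ∈ Set.Icc 1 N → q ∈ Set.Icc 1 N →
      star p (star q 1) = star (star p q) (star p 1)) :
    ∀ m p, p ∈ Set.Icc 1 N → N - p ≤ m → p < N → ∀ q, q ∈ Set.Icc 1 N →
      p < star p q := by
  intro m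
  induction m with
  | zero =>
    intro p hp hm hpN q hq
    rw [Set.mem_Icc] at hp
    omega
  | succ m IHm =>
    intro p hp hm hpN q hq
    have hp1 : star p 1 = p + 1 := by rw [hbase p hp, Nat.mod_eq_of_lt hpN]
    rw [Set.mem_Icc] at hq
    obtain ⟨h1, h2⟩ := hq
    revert h2
    induction q, h1 using Nat.le_induction with
    | base => intro _; rw [hp1]; omega
    | succ q h1 IH =>
      intro h2
      have hqm : q ∈ Set.Icc 1 N := Set.mem_Icc.mpr ⟨h1, by omega⟩
      have hq1 : star q 1 = q + 1 := by rw [hbase q hqm, Nat.mod_eq_of_lt (by omega)]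
      have h3 := hdist p q hp hqm
      rw [hq1, hp1] at h3
      have hw : star p q ∈ Set.Icc 1 N := hcl p q hp hqm
      have hpw : p < star p q := IH (by omega)
      have hw' := Set.mem_Icc.mp hw
      have hp1m : p + 1 ∈ Set.Icc 1 N := Set.mem_Icc.mpr ⟨by omega, by omega⟩
      rcases eq_or_lt_of_le hw'.2 with he | hlt
      · rw [h3, he, rowN hN hbase hdist (p + 1) hp1m]; omega
      · have := IHm (star p q) hw (by omega) hlt (p + 1) hp1m
        rw [h3]
        omega

theorem colN (hN : 1 ≤ N)
    (hcl : ∀ p q, p ∈ Set.Icc 1 N → q ∈ Set.Icc 1 N → star p q ∈ Set.Icc 1 N)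
    (hbase : ∀ p ∈ Set.Icc 1 N, star p 1 = p % N + 1)
    (hdist : ∀ p q, p ∈ Set.Icc 1 N → q ∈ Set.Icc 1 N →
      star p (star q 1) = star (star p q) (star p 1)) :
    ∀ p ∈ Set.Icc 1 N, star p N = N := by
  intro p hp
  have hNm : N ∈ Set.Icc 1 N := Set.mem_Icc.mpr ⟨hN, le_rfl⟩
  rcases eq_or_lt_of_le (Set.mem_Icc.mp hp).2 with he | hlt
  · rw [he]; exact rowN hN hbase hdist N hNm
  · have hz : star p N ∈ Set.Icc 1 N := hcl p N hp hNm
    have hpz : p < star p N := gtl hN hcl hbase hdist (N - p) p hp le_rfl hlt N hNm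
    have h3 := hdist p N hp hNm
    have hN1 : star N 1 = 1 := by rw [hbase N hNm, Nat.mod_self]
    have hp1 : star p 1 = p + 1 := by rw [hbase p hp, Nat.mod_eq_of_lt hlt]
    rw [hN1, hp1] at h3
    rcases eq_or_lt_of_le (Set.mem_Icc.mp hz).2 with he2 | hlt2
    · exact he2
    · have hp1m : p + 1 ∈ Set.Icc 1 N := Set.mem_Icc.mpr ⟨by omega, by omega⟩
      have h4 := gtl hN hcl hbase hdist (N - star p N) (star p N) hz le_rfl hlt2
        (p + 1) hp1m
      rw [← h3] at h4
      omega

/-- Full left self-distributivity. -/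
theorem LD (hN : 1 ≤ N)
    (hcl : ∀ p q, p ∈ Set.Icc 1 N → q ∈ Set.Icc 1 N → star p q ∈ Set.Icc 1 N)
    (hbase : ∀ p ∈ Set.Icc 1 N, star p 1 = p % N + 1)
    (hdist : ∀ p q, p ∈ Set.Icc 1 N → q ∈ Set.Icc 1 N →
      star p (star q 1) = star (star p q) (star p 1)) :
    ∀ m1 p, p ∈ Set.Icc 1 N → N - p ≤ m1 →
    ∀ m2 q, q ∈ Set.Icc 1 N → N - q ≤ m2 →
    ∀ r ∈ Set.Icc 1 N, star p (star q r) = star (star p q) (star p r) := by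
  have hrowN := rowN hN hbase hdist
  have hcolN := colN hN hcl hbase hdist
  intro m1
  induction m1 with
  | zero =>
    intro p hp hm1 m2 q hq hm2 r hr
    have hp' := Set.mem_Icc.mp hp
    have hpN : p = N := by omega
    subst hpN
    rw [hrowN q hq, hrowN r hr, hrowN (star q r) (hcl q r hq hr)]
  | succ m1 IH1 =>
    intro p hp hm1
    rcases eq_or_lt_of_le (Set.mem_Icc.mp hp).2 with hpe | hpN
    · subst hpe
      intro m2 q hq hm2 r hr
      rw [hrowN q hq, hrowN r hr, hrowN (star q r) (hcl q r hq hr)]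
    · intro m2
      induction m2 with
      | zero =>
        intro q hq hm2 r hr
        have hqN : q = N := by rw [Set.mem_Icc] at hq; omega
        subst hqN
        rw [hrowN r hr, hcolN p hp, hrowN (star p r) (hcl p r hp hr)]
      | succ m2 IH2 =>
        intro q hq hm2
        rcases eq_or_lt_of_le (Set.mem_Icc.mp hq).2 with hqe | hqN
        · subst hqe
          intro r hr
          rw [hrowN r hr, hcolN p hp, hrowN (star p r) (hcl p r hp hr)]
        · intro r hr
          rw [Set.mem_Icc] at hr
          obtain ⟨hr1, hr2⟩ := hr
          revert hr2
          induction r, hr1 using Nat.le_induction with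
          | base =>
            intro _
            exact hdist p q hp hq
          | succ r hr1 IH3 =>
            intro hr2
            have hrm : r ∈ Set.Icc 1 N := Set.mem_Icc.mpr ⟨hr1, by omega⟩
            have hp1 : star p 1 = p + 1 := by rw [hbase p hp, Nat.mod_eq_of_lt hpN]
            have hq1 : star q 1 = q + 1 := by rw [hbase q hq, Nat.mod_eq_of_lt hqN]
            have hr1' : star r 1 = r + 1 := by
              rw [hbase r hrm, Nat.mod_eq_of_lt (by omega)]
            have hwm : star q r ∈ Set.Icc 1 N := hcl q r hq hrm
            have hqw : q < star q r :=
              gtl hN hcl hbase hdist (N - q) q hq le_rfl hqN r hrm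
            have hq1m : q + 1 ∈ Set.Icc 1 N := Set.mem_Icc.mpr ⟨by omega, by omega⟩
            have hprm : star p r ∈ Set.Icc 1 N := hcl p r hp hrm
            have hpqm : star p q ∈ Set.Icc 1 N := hcl p q hp hq
            have h1m : (1 : ℕ) ∈ Set.Icc 1 N := Set.mem_Icc.mpr ⟨le_rfl, hN⟩
            have hp1m : star p 1 ∈ Set.Icc 1 N := hcl p 1 hp h1m
            have hppq : p < star p q :=
              gtl hN hcl hbase hdist (N - p) p hp le_rfl hpN q hq
            have e1 : star q (r + 1) = star (star q r) (q + 1) := by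
              have h' := hdist q r hq hrm
              rw [hr1', hq1] at h'
              exact h'
            have e2 := IH2 (star q r) hwm
              (by rw [Set.mem_Icc] at hwm; omega) (q + 1) hq1m
            have e3 := IH3 (by omega)
            have e4 : star p (q + 1) = star (star p q) (star p 1) := by
              have h' := hdist p q hp hq; rw [hq1] at h'; exact h'
            have e5 : star p (r + 1) = star (star p r) (star p 1) := by
              have h' := hdist p r hp hrm; rw [hr1'] at h'; exact h'
            have e6 := IH1 (star p q) hpqm
              (by rw [Set.mem_Icc] at hpqm; omega) N (star p r) hprm
              (by omega) (star p 1) hp1m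
            rw [e1, e2, e3, e4, e5, e6]

/-- base fact about the conjugated map: `g (succ q) = succ (p ⋆ q)`. -/
theorem gb (hN : 1 ≤ N)
    (hcl : ∀ p q, p ∈ Set.Icc 1 N → q ∈ Set.Icc 1 N → star p q ∈ Set.Icc 1 N)
    (hbase : ∀ p ∈ Set.Icc 1 N, star p 1 = p % N + 1)
    (hdist : ∀ p q, p ∈ Set.Icc 1 N → q ∈ Set.Icc 1 N →
      star p (star q 1) = star (star p q) (star p 1))
    (p : ℕ) (hp : p ∈ Set.Icc 1 N) :
    ∀ q ∈ Set.Icc 1 N,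
      star p (sinv N (star q 1)) % N + 1 = star p q % N + 1 := by
  intro q hq
  rw [hbase q hq]
  rcases eq_or_lt_of_le (Set.mem_Icc.mp hq).2 with he | hlt
  · subst he
    rw [Nat.mod_self]
    have h5 : sinv q 1 = q := by unfold sinv; simp
    rw [h5]
  · rw [Nat.mod_eq_of_lt hlt]
    have h5 : sinv N (q + 1) = q := by
      unfold sinv
      rw [Set.mem_Icc] at hq
      split <;> omega
    rw [h5]

/-- Main conjugation lemma: `g (q ⋆ t) = (p ⋆ q) ⋆ (g t)` where
`g t = succ (p ⋆ sinv t)`. -/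
theorem Hlem (hN : 1 ≤ N)
    (hcl : ∀ p q, p ∈ Set.Icc 1 N → q ∈ Set.Icc 1 N → star p q ∈ Set.Icc 1 N)
    (hbase : ∀ p ∈ Set.Icc 1 N, star p 1 = p % N + 1)
    (hdist : ∀ p q, p ∈ Set.Icc 1 N → q ∈ Set.Icc 1 N →
      star p (star q 1) = star (star p q) (star p 1))
    (p : ℕ) (hp : p ∈ Set.Icc 1 N) :
    ∀ m2 q, q ∈ Set.Icc 1 N → N - q ≤ m2 → ∀ t ∈ Set.Icc 1 N,
      star p (sinv N (star q t)) % N + 1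
        = star (star p q) (star p (sinv N t) % N + 1) := by
  have hrowN := rowN hN hbase hdist
  have hcolN := colN hN hcl hbase hdist
  have hg_mem : ∀ t, star p (sinv N t) % N + 1 ∈ Set.Icc 1 N := by
    intro t
    rw [Set.mem_Icc]
    have := Nat.mod_lt (star p (sinv N t)) (show 0 < N by omega)
    omega
  intro m2
  induction m2 with
  | zero =>
    intro q hq hm2 t ht
    have hqN : q = N := by rw [Set.mem_Icc] at hq; omega
    subst hqN
    rw [hrowN t ht, hcolN p hp, hrowN _ (hg_mem t)]
  | succ m2 IH2 =>
    intro q hq hm2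
    rcases eq_or_lt_of_le (Set.mem_Icc.mp hq).2 with hqe | hqN
    · subst hqe
      intro t ht
      rw [hrowN t ht, hcolN p hp, hrowN _ (hg_mem t)]
    · intro t ht
      rw [Set.mem_Icc] at ht
      obtain ⟨ht1, ht2⟩ := ht
      revert ht2
      induction t, ht1 using Nat.le_induction with
      | base =>
        intro _
        have hg1 : star p (sinv N 1) % N + 1 = 1 := by
          have h5 : sinv N 1 = N := by unfold sinv; simp
          rw [h5, hcolN p hp, Nat.mod_self]
        rw [gb hN hcl hbase hdist p hp q hq, hg1,
          hbase (star p q) (hcl p q hp hq)]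
      | succ t ht1 IH3 =>
        intro ht2
        have htm : t ∈ Set.Icc 1 N := Set.mem_Icc.mpr ⟨ht1, by omega⟩
        have hq1 : star q 1 = q + 1 := by rw [hbase q hq, Nat.mod_eq_of_lt hqN]
        have ht1' : star t 1 = t + 1 := by
          rw [hbase t htm, Nat.mod_eq_of_lt (by omega)]
        have hwm : star q t ∈ Set.Icc 1 N := hcl q t hq htm
        have hqw : q < star q t :=
          gtl hN hcl hbase hdist (N - q) q hq le_rfl hqN t htm
        have hq1m : q + 1 ∈ Set.Icc 1 N := Set.mem_Icc.mpr ⟨by omega, by omega⟩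
        have e1 : star q (t + 1) = star (star q t) (q + 1) := by
          have h' := hdist q t hq htm
          rw [ht1', hq1] at h'
          exact h'
        have e2 := IH2 (star q t) hwm
          (by rw [Set.mem_Icc] at hwm; omega) (q + 1) hq1m
        have e3 : star p (star q t) = star (star p q) (star p t) :=
          LD hN hcl hbase hdist N p hp (by omega) N q hq (by omega) t htm
        have e4 : star p (sinv N (q + 1)) % N + 1 = star (star p q) 1 := by
          have hq' := Set.mem_Icc.mp hq
          have h5 : sinv N (q + 1) = q := by unfold sinv; split <;> omega
          rw [h5, hbase (star p q) (hcl p q hp hq)]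
        have e5 := hdist (star p q) (star p t) (hcl p q hp hq) (hcl p t hp htm)
        have e6 : sinv N (t + 1) = t := by unfold sinv; split <;> omega
        rw [e1, e2, e3, e4, e6, ← e5, hbase (star p t) (hcl p t hp htm)]

end Core

end LaverProofAux

/-- in the Laver table of order 2^n, with ∘ₙ the composition operation
(characterized by λ_{p ∘ₙ q} = λ_p ∘ λ_q), one has
p ⋆ₙ (q ∘ₙ r) = (p ⋆ₙ q) ∘ₙ (p ⋆ₙ r), (p ∘ₙ q) ⋆ₙ r = p ⋆ₙ (q ⋆ₙ r), and
(p ⋆ₙ q) ∘ₙ p = p ∘ₙ q. -/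
theorem laver_star_comp_identities (n : ℕ) (star comp : ℕ → ℕ → ℕ)
    (h : LaverAxioms (2 ^ n) star)
    (hcomp : ∀ p ∈ Set.Icc 1 (2 ^ n), ∀ q ∈ Set.Icc 1 (2 ^ n),
      comp p q ∈ Set.Icc 1 (2 ^ n) ∧
      ∀ r ∈ Set.Icc 1 (2 ^ n), star p (star q r) = star (comp p q) r) :
    ∀ p ∈ Set.Icc 1 (2 ^ n), ∀ q ∈ Set.Icc 1 (2 ^ n), ∀ r ∈ Set.Icc 1 (2 ^ n),
      star p (comp q r) = comp (star p q) (star p r) ∧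
      star (comp p q) r = star p (star q r) ∧
      comp (star p q) p = comp p q := by
  obtain ⟨hcl, hbase, hdist⟩ := h
  have hN : 1 ≤ 2 ^ n := Nat.one_le_two_pow
  intro p hp q hq r hr
  have h1m : (1 : ℕ) ∈ Set.Icc 1 (2 ^ n) := Set.mem_Icc.mpr ⟨le_rfl, hN⟩
  refine ⟨?_, ?_, ?_⟩
  · -- star p (comp q r) = comp (star p q) (star p r)
    have hs := (hcomp q hq r hr).1
    have hX : star p (comp q r) ∈ Set.Icc 1 (2 ^ n) := hcl p (comp q r) hp hs
    have hpq : star p q ∈ Set.Icc 1 (2 ^ n) := hcl p q hp hq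
    have hpr : star p r ∈ Set.Icc 1 (2 ^ n) := hcl p r hp hr
    have hY : comp (star p q) (star p r) ∈ Set.Icc 1 (2 ^ n) :=
      (hcomp _ hpq _ hpr).1
    apply LaverProofAux.succ_inj hN hX hY
    have c1 : star q (star r 1) = star (comp q r) 1 := (hcomp q hq r hr).2 1 h1m
    have hr1m : star r 1 ∈ Set.Icc 1 (2 ^ n) := hcl r 1 hr h1m
    calc star p (comp q r) % 2 ^ n + 1
        = star p (LaverProofAux.sinv (2 ^ n) (star (comp q r) 1)) % 2 ^ n + 1 :=
          (LaverProofAux.gb hN hcl hbase hdist p hp (comp q r) hs).symm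
      _ = star p (LaverProofAux.sinv (2 ^ n) (star q (star r 1))) % 2 ^ n + 1 := by
          rw [c1]
      _ = star (star p q)
            (star p (LaverProofAux.sinv (2 ^ n) (star r 1)) % 2 ^ n + 1) :=
          LaverProofAux.Hlem hN hcl hbase hdist p hp (2 ^ n) q hq
            (Nat.sub_le _ _) (star r 1) hr1m
      _ = star (star p q) (star p r % 2 ^ n + 1) := by
          rw [LaverProofAux.gb hN hcl hbase hdist p hp r hr]
      _ = star (star p q) (star (star p r) 1) := by rw [hbase (star p r) hpr]
      _ = star (comp (star p q) (star p r)) 1 := (hcomp _ hpq _ hpr).2 1 h1m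
      _ = comp (star p q) (star p r) % 2 ^ n + 1 := hbase _ hY
  · exact ((hcomp p hp q hq).2 r hr).symm
  · have hpq : star p q ∈ Set.Icc 1 (2 ^ n) := hcl p q hp hq
    have ha := (hcomp _ hpq p hp).1
    have hb := (hcomp p hp q hq).1
    apply LaverProofAux.succ_inj hN ha hb
    rw [← hbase _ ha, ← hbase _ hb, ← (hcomp _ hpq p hp).2 1 h1m,
      ← (hcomp p hp q hq).2 1 h1m]
    exact (hdist p q hp hq).symm
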